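/- arXiv:2604.01263 — 6 statements merged into one kernel-verified Lean document; each statement's English description precedes it below -/
import Mathlib

section
/- If the Gibbs distribution is supported on {0} ∪ [1,∞), c_0 > 0, and z'(β) ≤ 1/2, then z(β) - log c_0 ≤ 2 z'(β), i.e., log(Z(β)/c_0) ≤ 2·E_{X∼μ_β}[X]. -/
open Real Finset

/-- if the support is in {0} ∪ [1,∞), c₀ > 0 and z'(β) ≤ 1/2, then
    log(Z(β)/c₀) ≤ 2 z'(β). -/
theorem gibbs_log_ratio_le_two_mean
    (S : Finset ℝ) (hS0 : (0 : ℝ) ∈ S) (hS : ∀ x ∈ S, x = 0 ∨ 1 ≤ x)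
    (c : ℝ → ℝ) (hc : ∀ x ∈ S, 0 < c x)
    (Z : ℝ → ℝ) (hZ : ∀ β, Z β = ∑ x ∈ S, c x * Real.exp (β * x))
    (z : ℝ → ℝ) (hz : ∀ β, z β = Real.log (Z β))
    (z' : ℝ → ℝ)
    (hz' : ∀ β, z' β = ∑ x ∈ S, x * (c x * Real.exp (β * x) / Z β))
    (β : ℝ) (hhalf : z' β ≤ 1 / 2) :
    z β - Real.log (c 0) ≤ 2 * z' β := by
  set T := S.erase 0 with hT
  have hc0 : 0 < c 0 := hc 0 hS0
  set B : ℝ := ∑ x ∈ T, c x * Real.exp (β * x) with hB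
  have hBnn : 0 ≤ B := Finset.sum_nonneg fun x hx =>
    le_of_lt (mul_pos (hc x (Finset.mem_of_mem_erase hx)) (Real.exp_pos _))
  have hZsplit : Z β = c 0 + B := by
    rw [hZ, ← Finset.add_sum_erase _ _ hS0]
    simp [hB, hT]
  have hZpos : 0 < Z β := by rw [hZsplit]; linarith
  -- z' ≥ B / Z
  have hz'ge : B / Z β ≤ z' β := by
    rw [hz', ← Finset.add_sum_erase _ _ hS0]
    simp only [zero_mul, zero_add]
    rw [hB, Finset.sum_div]
    refine Finset.sum_le_sum fun x hx => ?_
    have hxS := Finset.mem_of_mem_erase hx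
    have hterm : 0 ≤ c x * Real.exp (β * x) / Z β :=
      le_of_lt (div_pos (mul_pos (hc x hxS) (Real.exp_pos _)) hZpos)
    have h1 : 1 ≤ x := (hS x hxS).resolve_left (Finset.ne_of_mem_erase hx)
    exact le_mul_of_one_le_left hterm h1
  have hz'nn : 0 ≤ z' β := le_trans (div_nonneg hBnn hZpos.le) hz'ge
  have hBle : B ≤ z' β * Z β := (div_le_iff₀ hZpos).mp hz'ge
  have hZle : Z β ≤ 2 * c 0 := by nlinarith
  have hlog : z β - Real.log (c 0) = Real.log (1 + B / c 0) := by
    rw [hz, ← Real.log_div hZpos.ne' hc0.ne']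
    congr 1
    field_simp [hZsplit]
    exact hZsplit
  rw [hlog]
  have h2 : Real.log (1 + B / c 0) ≤ B / c 0 := by
    have := Real.log_le_sub_one_of_pos (x := 1 + B / c 0)
      (by positivity)
    linarith
  refine h2.trans ?_
  rw [div_le_iff₀ hc0]
  nlinarith
end

section
/- For β₁ < β₂ with z'(β₁) > 0, the curvature satisfies κ(β₁,β₂) ≤ (z(β₂) - z(β₁)) · log(z'(β₂)/z'(β₁)). -/
open Real Finset

set_option maxHeartbeats 1000000 in
/-- the curvature κ(β₁,β₂) is at most (z(β₂)-z(β₁))·log(z'(β₂)/z'(β₁)). -/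
theorem curvature_le_width_mul_log_deriv_ratio
    (S : Finset ℝ) (hS : S.Nonempty) (hSpos : ∀ x ∈ S, 0 ≤ x)
    (c : ℝ → ℝ) (hc : ∀ x ∈ S, 0 < c x)
    (Z : ℝ → ℝ) (hZ : ∀ β, Z β = ∑ x ∈ S, c x * Real.exp (β * x))
    (z : ℝ → ℝ) (hz : ∀ β, z β = Real.log (Z β))
    (β₁ β₂ : ℝ) (hβ : β₁ < β₂) (hpos : 0 < deriv z β₁) :
    z β₁ - 2 * z ((β₁ + β₂) / 2) + z β₂
      ≤ (z β₂ - z β₁) * Real.log (deriv z β₂ / deriv z β₁) := by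
  have hzf : z = fun β => Real.log (Z β) := funext hz
  have hZf : Z = fun β => ∑ x ∈ S, c x * Real.exp (β * x) := funext hZ
  subst hzf hZf
  set Z : ℝ → ℝ := fun β => ∑ x ∈ S, c x * Real.exp (β * x) with hZdef
  set F₁ : ℝ → ℝ := fun β => ∑ x ∈ S, c x * x * Real.exp (β * x) with hF₁def
  set F₂ : ℝ → ℝ := fun β => ∑ x ∈ S, c x * x * x * Real.exp (β * x) with hF₂def
  have Zpos : ∀ β, 0 < Z β := fun β =>
    Finset.sum_pos (fun x hx => mul_pos (hc x hx) (Real.exp_pos _)) hS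
  have hZd : ∀ β, HasDerivAt Z (F₁ β) β := by
    intro β
    apply HasDerivAt.fun_sum
    intro x hx
    have h1 : HasDerivAt (fun b : ℝ => b * x) x β := by
      simpa using (hasDerivAt_id β).mul_const x
    have h2 := (h1.exp).const_mul (c x)
    convert h2 using 1
    · rfl
    ring
  have hF₁d : ∀ β, HasDerivAt F₁ (F₂ β) β := by
    intro β
    apply HasDerivAt.fun_sum
    intro x hx
    have h1 : HasDerivAt (fun b : ℝ => b * x) x β := by
      simpa using (hasDerivAt_id β).mul_const x
    have h2 := (h1.exp).const_mul (c x * x)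
    convert h2 using 1
    · rfl
    ring
  set g : ℝ → ℝ := fun β => F₁ β / Z β with hgdef
  have hzd : ∀ β, HasDerivAt (fun β => Real.log (Z β)) (g β) β := fun β =>
    (hZd β).log (Zpos β).ne'
  have hderiv : ∀ β, deriv (fun β => Real.log (Z β)) β = g β := fun β => (hzd β).deriv
  -- Cauchy–Schwarz: F₁ β ^ 2 ≤ Z β * F₂ β
  have hCS : ∀ β, F₁ β ^ 2 ≤ Z β * F₂ β := by
    intro β
    have h := Finset.sum_mul_sq_le_sq_mul_sq S
      (fun x => Real.sqrt (c x * Real.exp (β * x)))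
      (fun x => x * Real.sqrt (c x * Real.exp (β * x)))
    have hnn : ∀ x ∈ S, (0:ℝ) ≤ c x * Real.exp (β * x) := fun x hx =>
      le_of_lt (mul_pos (hc x hx) (Real.exp_pos _))
    have e1 : ∀ x ∈ S, Real.sqrt (c x * Real.exp (β * x)) *
        (x * Real.sqrt (c x * Real.exp (β * x))) = c x * x * Real.exp (β * x) := by
      intro x hx
      have hs := Real.mul_self_sqrt (hnn x hx)
      linear_combination x * hs
    have e2 : ∀ x ∈ S, Real.sqrt (c x * Real.exp (β * x)) ^ 2 = c x * Real.exp (β * x) := by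
      intro x hx
      exact Real.sq_sqrt (hnn x hx)
    have e3 : ∀ x ∈ S, (x * Real.sqrt (c x * Real.exp (β * x))) ^ 2
        = c x * x * x * Real.exp (β * x) := by
      intro x hx
      rw [mul_pow, Real.sq_sqrt (hnn x hx)]
      ring
    calc F₁ β ^ 2 = (∑ x ∈ S, Real.sqrt (c x * Real.exp (β * x)) *
          (x * Real.sqrt (c x * Real.exp (β * x)))) ^ 2 := by
          rw [hF₁def]; congr 1; exact (Finset.sum_congr rfl e1).symm
      _ ≤ (∑ x ∈ S, Real.sqrt (c x * Real.exp (β * x)) ^ 2) *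
          ∑ x ∈ S, (x * Real.sqrt (c x * Real.exp (β * x))) ^ 2 := h
      _ = Z β * F₂ β := by
          rw [hZdef, hF₂def]
          congr 1
          · exact Finset.sum_congr rfl e2
          · exact Finset.sum_congr rfl e3
  have hgd : ∀ β, HasDerivAt g ((F₂ β * Z β - F₁ β * F₁ β) / Z β ^ 2) β := fun β =>
    (hF₁d β).div (hZd β) (Zpos β).ne'
  have hgmono : Monotone g := by
    apply monotone_of_deriv_nonneg
    · exact fun β => (hgd β).differentiableAt
    · intro β
      rw [(hgd β).deriv]
      apply div_nonneg _ (sq_nonneg _)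
      have := hCS β
      nlinarith [hCS β]
  rw [hderiv β₁] at hpos
  rw [hderiv β₁, hderiv β₂]
  set m : ℝ := (β₁ + β₂) / 2 with hm
  have hm1 : β₁ < m := by rw [hm]; linarith
  have hm2 : m < β₂ := by rw [hm]; linarith
  have hcont : ∀ s : Set ℝ, ContinuousOn (fun β => Real.log (Z β)) s := fun s =>
    Continuous.continuousOn (by
      apply continuous_iff_continuousAt.2
      exact fun β => (hzd β).differentiableAt.continuousAt)
  obtain ⟨ξ₁, hξ₁mem, hξ₁⟩ := exists_hasDerivAt_eq_slope (fun β => Real.log (Z β)) g hm1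
    (hcont _) (fun x _ => hzd x)
  obtain ⟨ξ₂, hξ₂mem, hξ₂⟩ := exists_hasDerivAt_eq_slope (fun β => Real.log (Z β)) g hm2
    (hcont _) (fun x _ => hzd x)
  set h : ℝ := (β₂ - β₁) / 2 with hh
  have hhpos : (0:ℝ) < h := by rw [hh]; linarith
  have hmb : m - β₁ = h := by rw [hm, hh]; ring
  have hbm : β₂ - m = h := by rw [hm, hh]; ring
  have e1 : Real.log (Z m) - Real.log (Z β₁) = g ξ₁ * h := by
    rw [hξ₁, hmb]
    field_simp
  have e2 : Real.log (Z β₂) - Real.log (Z m) = g ξ₂ * h := by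
    rw [hξ₂, hbm]
    field_simp
  set a : ℝ := g ξ₂
  set b : ℝ := g ξ₁
  set A : ℝ := g β₂
  set B : ℝ := g β₁
  have hBb : B ≤ b := hgmono hξ₁mem.1.le
  have hba : b ≤ a := hgmono (hξ₁mem.2.trans hξ₂mem.1).le
  have haA : a ≤ A := hgmono hξ₂mem.2.le
  have hB : 0 < B := hpos
  have hb : 0 < b := lt_of_lt_of_le hB hBb
  have ha : 0 < a := lt_of_lt_of_le hb hba
  have hA : 0 < A := lt_of_lt_of_le ha haA
  -- step 1: a - b ≤ a * log (a / b)
  have step1 : a - b ≤ a * Real.log (a / b) := by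
    have h1 : Real.log (b / a) ≤ b / a - 1 := Real.log_le_sub_one_of_pos (div_pos hb ha)
    have h2 : Real.log (b / a) = -Real.log (a / b) := by
      rw [← Real.log_inv]
      congr 1
      field_simp
    rw [h2] at h1
    have h3 : 1 - b / a ≤ Real.log (a / b) := by linarith
    have h4 := mul_le_mul_of_nonneg_left h3 ha.le
    have h5 : a * (1 - b / a) = a - b := by field_simp
    linarith
  -- step 2: log (a/b) ≤ log (A/B)
  have step2 : Real.log (a / b) ≤ Real.log (A / B) := by
    apply Real.log_le_log (div_pos ha hb)
    exact div_le_div₀ hA.le haA hB hBb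
  have hlogR : 0 ≤ Real.log (A / B) := by
    apply Real.log_nonneg
    rw [le_div_iff₀ hB]
    linarith [hBb.trans (hba.trans haA)]
  have key : (a - b) * h ≤ (a * h) * Real.log (A / B) := by
    have hab : a - b ≤ a * Real.log (A / B) :=
      step1.trans (mul_le_mul_of_nonneg_left step2 ha.le)
    calc (a - b) * h ≤ (a * Real.log (A / B)) * h :=
          mul_le_mul_of_nonneg_right hab hhpos.le
      _ = (a * h) * Real.log (A / B) := by ring
  have hzmono : Real.log (Z β₁) ≤ Real.log (Z m) := by
    have hbh : 0 ≤ b * h := mul_nonneg hb.le hhpos.le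
    linarith [e1]
  calc Real.log (Z β₁) - 2 * Real.log (Z m) + Real.log (Z β₂)
      = (a - b) * h := by linear_combination e2 - e1
    _ ≤ (a * h) * Real.log (A / B) := key
    _ = (Real.log (Z β₂) - Real.log (Z m)) * Real.log (A / B) := by rw [e2]
    _ ≤ (Real.log (Z β₂) - Real.log (Z β₁)) * Real.log (A / B) := by
        apply mul_le_mul_of_nonneg_right _ hlogR
        linarith
end

section
/- Let β₁ < β₂ with z'(β₁) > 0, let α = (β₁+β₂)/2 and v = z'(β₂)/z'(β₁) with 1 ≤ v ≤ e. Then (κ(β₁,β₂))/(z(β₂)-z(β₁)) ≤ (v-1)/2 ≤ log v. -/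
open Real

/-- with α = (β₁+β₂)/2 and v = z'(β₂)/z'(β₁) ∈ [1,e], and the convexity
    inequalities from the tangent lines, κ(β₁,β₂)/(z(β₂)-z(β₁)) ≤ (v-1)/2 ≤ log v. -/
theorem curvature_ratio_le_half_v_sub_one
    (z : ℝ → ℝ) (β₁ β₂ α d₁ d₂ v : ℝ)
    (hβ : β₁ < β₂) (hα : α = (β₁ + β₂) / 2)
    (hd₁ : 0 < d₁)
    (hv : v = d₂ / d₁) (hv1 : 1 ≤ v) (hve : v ≤ Real.exp 1)
    (hzw : z β₁ < z β₂)
    (h1 : z β₂ - z α ≤ d₂ * (β₂ - α))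
    (h2 : d₁ * (α - β₁) ≤ z α - z β₁)
    (h3 : d₁ * (β₂ - β₁) ≤ z β₂ - z β₁) :
    (z β₁ - 2 * z α + z β₂) / (z β₂ - z β₁) ≤ (v - 1) / 2 ∧
      (v - 1) / 2 ≤ Real.log v := by
  have hd2 : d₂ = v * d₁ := by rw [hv]; field_simp
  have hh : β₂ - α = (β₂ - β₁) / 2 := by rw [hα]; ring
  have hh' : α - β₁ = (β₂ - β₁) / 2 := by rw [hα]; ring
  have hhp : 0 < (β₂ - β₁) / 2 := by linarith
  have hD : 0 < z β₂ - z β₁ := by linarith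
  constructor
  · rw [div_le_iff₀ hD]
    rw [hh, hd2] at h1
    rw [hh'] at h2
    nlinarith [mul_pos hd₁ hhp, mul_le_mul_of_nonneg_left h3 (by linarith : (0:ℝ) ≤ (v-1)/2)]
  · have he : (1:ℝ) < Real.exp 1 := by
      have := Real.exp_one_gt_d9; linarith
    have he3 : Real.exp 1 < 3 := by
      have := Real.exp_one_lt_d9; linarith
    set E := Real.exp 1 with hE
    have hE1 : 0 < E - 1 := by linarith
    have ha : 0 ≤ (E - v) / (E - 1) := div_nonneg (by linarith) (by linarith)
    have hb : 0 ≤ (v - 1) / (E - 1) := div_nonneg (by linarith) (by linarith)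
    have hab : (E - v) / (E - 1) + (v - 1) / (E - 1) = 1 := by field_simp; ring
    have hc := strictConcaveOn_log_Ioi.concaveOn.2 (Set.mem_Ioi.mpr one_pos)
      (Set.mem_Ioi.mpr (Real.exp_pos 1)) ha hb hab
    have hlogE : Real.log E = 1 := by rw [hE, Real.log_exp]
    simp only [smul_eq_mul, mul_one, Real.log_one, mul_zero, zero_add, hlogE, Real.log_exp] at hc
    have hcomb : (E - v) / (E - 1) + (v - 1) / (E - 1) * E = v := by
      field_simp; ring
    rw [hcomb] at hc
    have h2v : (v - 1) / 2 ≤ (v - 1) / (E - 1) :=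
      div_le_div_of_nonneg_left (by linarith) hE1 (by linarith)
    linarith
end

section
/- If U₁,…,U_t are independent positive random variables with Var[U_i]/E[U_i]² = (e^{κ_i}-1)/k, then the product U = U₁⋯U_t satisfies Var[U]/E[U]² = -1 + ∏_i (1 + (e^{κ_i}-1)/k), and this is at most (e^{κ}-1)/k where κ = Σ_i κ_i, provided k ≥ 1 and κ_i ≥ 0. -/
open MeasureTheory ProbabilityTheory Finset

section Aux

variable {Ω : Type*} [MeasurableSpace Ω] {μ : Measure Ω} [IsProbabilityMeasure μ]
variable {ι : Type*} {f : ι → Ω → ℝ}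

lemma aux_integral_prod_indep
    (hindep : iIndepFun (m := fun _ : ι => (inferInstance : MeasurableSpace ℝ)) f μ)
    (hmeas : ∀ i, Measurable (f i)) (hnn : ∀ i ω, 0 ≤ f i ω)
    (hint : ∀ i, Integrable (f i) μ) (s : Finset ι) :
    ∫ ω, (∏ i ∈ s, f i) ω ∂μ = ∏ i ∈ s, ∫ ω, f i ω ∂μ := by
  classical
  induction s using Finset.induction_on with
  | empty => simp
  | @insert i s hi ih =>
    rw [Finset.prod_insert hi, Finset.prod_insert hi, ← ih]
    have hIndep : IndepFun (f i) (∏ j ∈ s, f j) μ :=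
      (hindep.indepFun_finsetProd_of_notMem hmeas hi).symm
    have hprodnn : 0 ≤ (∏ j ∈ s, f j) := by
      intro ω
      rw [Finset.prod_apply]
      exact Finset.prod_nonneg fun j _ => hnn j ω
    have hprodm : Measurable (∏ j ∈ s, f j) := by
      rw [show (∏ j ∈ s, f j) = fun ω => ∏ j ∈ s, f j ω from funext fun ω => Finset.prod_apply ..]
      exact Finset.measurable_prod s fun j _ => hmeas j
    exact hIndep.integral_fun_mul_eq_mul_integral
      (hmeas i).aestronglyMeasurable hprodm.aestronglyMeasurable

lemma aux_memℒp_prod_indep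
    (hindep : iIndepFun (m := fun _ : ι => (inferInstance : MeasurableSpace ℝ)) f μ)
    (hmeas : ∀ i, Measurable (f i)) (hL2 : ∀ i, MemLp (f i) 2 μ) (s : Finset ι) :
    MemLp (∏ i ∈ s, f i) 2 μ := by
  classical
  induction s using Finset.induction_on with
  | empty => rw [Finset.prod_empty]; exact memLp_const (1 : ℝ)
  | @insert i s hi ih =>
    rw [Finset.prod_insert hi]
    have hprodm : Measurable (∏ j ∈ s, f j) := by
      rw [show (∏ j ∈ s, f j) = fun ω => ∏ j ∈ s, f j ω from funext fun ω => Finset.prod_apply ..]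
      exact Finset.measurable_prod s fun j _ => hmeas j
    have hIndep : IndepFun (f i) (∏ j ∈ s, f j) μ :=
      (hindep.indepFun_finsetProd_of_notMem hmeas hi).symm
    have hIndepSq : IndepFun (fun ω => f i ω ^ 2) (fun ω => (∏ j ∈ s, f j) ω ^ 2) μ := by
      exact hIndep.comp (measurable_id.pow_const 2) (measurable_id.pow_const 2)
    have hfi2 : Integrable (fun ω => f i ω ^ 2) μ :=
      (memLp_two_iff_integrable_sq (hmeas i).aestronglyMeasurable).mp (hL2 i)
    have hg2 : Integrable (fun ω => (∏ j ∈ s, f j) ω ^ 2) μ :=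
      (memLp_two_iff_integrable_sq hprodm.aestronglyMeasurable).mp ih
    have hmul : Integrable (fun ω => (f i ω * (∏ j ∈ s, f j) ω) ^ 2) μ := by
      have := hIndepSq.integrable_mul hfi2 hg2
      convert this using 1
      funext ω
      simp [mul_pow]
    refine (memLp_two_iff_integrable_sq ?_).mpr ?_
    · exact ((hmeas i).mul hprodm).aestronglyMeasurable
    · exact hmul

lemma aux_prod_relvar_le {k : ℝ} (hk : 1 ≤ k) (κ : ι → ℝ) (hκ : ∀ i, 0 ≤ κ i)
    (s : Finset ι) :
    ∏ i ∈ s, (1 + (Real.exp (κ i) - 1) / k) ≤ 1 + (Real.exp (∑ i ∈ s, κ i) - 1) / k := by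
  classical
  have hk0 : (0 : ℝ) < k := lt_of_lt_of_le one_pos hk
  induction s using Finset.induction_on with
  | empty => simp
  | @insert i s hi ih =>
    rw [Finset.prod_insert hi, Finset.sum_insert hi]
    set a := Real.exp (κ i) - 1 with ha_def
    set b := Real.exp (∑ j ∈ s, κ j) - 1 with hb_def
    have ha : 0 ≤ a := by
      simp only [ha_def, sub_nonneg, Real.one_le_exp_iff]
      exact hκ i
    have hb : 0 ≤ b := by
      simp only [hb_def, sub_nonneg, Real.one_le_exp_iff]
      exact Finset.sum_nonneg fun j _ => hκ j
    have hfac : 0 ≤ 1 + a / k := by positivity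
    calc (1 + a / k) * ∏ j ∈ s, (1 + (Real.exp (κ j) - 1) / k)
        ≤ (1 + a / k) * (1 + b / k) := by
          apply mul_le_mul_of_nonneg_left ih hfac
      _ = 1 + (a + b + a * b / k) / k := by field_simp; ring
      _ ≤ 1 + (a + b + a * b) / k := by
          gcongr
          exact div_le_self (mul_nonneg ha hb) hk
      _ = 1 + (Real.exp (κ i + ∑ j ∈ s, κ j) - 1) / k := by
          rw [Real.exp_add, ha_def, hb_def]; ring_nf
end Aux

/-- relative variance of a product of independent positive random
    variables with relative variance (e^{κᵢ}-1)/k each. -/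
theorem relvar_of_product
    {Ω : Type*} [MeasurableSpace Ω] (μ : Measure Ω) [IsProbabilityMeasure μ]
    (t : ℕ) (U : Fin t → Ω → ℝ)
    (hUpos : ∀ i ω, 0 < U i ω)
    (hUmeas : ∀ i, Measurable (U i))
    (hUsq : ∀ i, MemLp (U i) 2 μ)
    (hindep : iIndepFun (m := fun _ : Fin t => (inferInstance : MeasurableSpace ℝ)) U μ)
    (k : ℝ) (hk : 1 ≤ k) (κ : Fin t → ℝ) (hκ : ∀ i, 0 ≤ κ i)
    (hrelvar : ∀ i, variance (U i) μ = (Real.exp (κ i) - 1) / k * (∫ ω, U i ω ∂μ) ^ 2) :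
    variance (fun ω => ∏ i, U i ω) μ / (∫ ω, ∏ i, U i ω ∂μ) ^ 2
        = -1 + ∏ i, (1 + (Real.exp (κ i) - 1) / k) ∧
      -1 + ∏ i, (1 + (Real.exp (κ i) - 1) / k)
        ≤ (Real.exp (∑ i, κ i) - 1) / k := by
  constructor
  · -- the equality
    have hUint : ∀ i, Integrable (U i) μ :=
      fun i => (hUsq i).integrable one_le_two
    -- mean of each factor is positive
    have hm_pos : ∀ i, 0 < ∫ ω, U i ω ∂μ := by
      intro i
      rw [integral_pos_iff_support_of_nonneg (fun ω => (hUpos i ω).le) (hUint i)]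
      have : Function.support (U i) = Set.univ := by
        ext ω; simp [Function.support, (hUpos i ω).ne']
      rw [this]
      simp
    -- L² of the product
    have hprodL2 : MemLp (∏ i, U i) 2 μ :=
      aux_memℒp_prod_indep hindep hUmeas hUsq Finset.univ
    have hprodL2' : MemLp (fun ω => ∏ i, U i ω) 2 μ := by
      convert hprodL2 using 1
      funext ω; rw [Finset.prod_apply]
    -- integral of product
    have hEprod : ∫ ω, ∏ i, U i ω ∂μ = ∏ i, ∫ ω, U i ω ∂μ := by
      have := aux_integral_prod_indep hindep hUmeas (fun i ω => (hUpos i ω).le)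
        hUint Finset.univ
      rw [← this]
      congr 1
      funext ω; rw [Finset.prod_apply]
    -- squares are independent nonneg integrable
    have hsq_indep : iIndepFun (m := fun _ : Fin t => (inferInstance : MeasurableSpace ℝ))
        (fun i ω => U i ω ^ 2) μ :=
      hindep.comp (fun _ x => x ^ 2) (fun _ => measurable_id.pow_const 2)
    have hsq_int : ∀ i, Integrable (fun ω => U i ω ^ 2) μ := fun i =>
      (memLp_two_iff_integrable_sq (hUmeas i).aestronglyMeasurable).mp (hUsq i)
    have hEprodsq : ∫ ω, (∏ i, U i ω) ^ 2 ∂μ = ∏ i, ∫ ω, U i ω ^ 2 ∂μ := by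
      have := aux_integral_prod_indep hsq_indep
        (fun i => (hUmeas i).pow_const 2)
        (fun i ω => sq_nonneg _)
        hsq_int Finset.univ
      rw [← this]
      congr 1
      funext ω
      rw [Finset.prod_apply, ← Finset.prod_pow]
    -- second moment of each factor
    have hEsq : ∀ i, ∫ ω, U i ω ^ 2 ∂μ
        = (1 + (Real.exp (κ i) - 1) / k) * (∫ ω, U i ω ∂μ) ^ 2 := by
      intro i
      have hv := variance_eq_sub (hUsq i)
      rw [hrelvar i] at hv
      have : ∫ ω, U i ω ^ 2 ∂μ = μ[(U i) ^ 2] := by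
        congr 1
      rw [this]
      linarith [hv]
    -- variance of the product
    have hvar : variance (fun ω => ∏ i, U i ω) μ
        = ∏ i, ∫ ω, U i ω ^ 2 ∂μ - (∫ ω, ∏ i, U i ω ∂μ) ^ 2 := by
      have hv := variance_eq_sub hprodL2'
      rw [hv, ← hEprodsq]
      rfl
    rw [hvar]
    have hM : (∫ ω, ∏ i, U i ω ∂μ) ^ 2 = ∏ i, (∫ ω, U i ω ∂μ) ^ 2 := by
      rw [hEprod, ← Finset.prod_pow]
    have hMpos : 0 < ∏ i, (∫ ω, U i ω ∂μ) ^ 2 :=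
      Finset.prod_pos fun i _ => pow_pos (hm_pos i) 2
    rw [hM]
    have hnum : ∏ i, ∫ ω, U i ω ^ 2 ∂μ
        = (∏ i, (1 + (Real.exp (κ i) - 1) / k)) * ∏ i, (∫ ω, U i ω ∂μ) ^ 2 := by
      rw [← Finset.prod_mul_distrib]
      exact Finset.prod_congr rfl fun i _ => hEsq i
    rw [hnum]
    field_simp
    ring
  · -- the inequality
    have := aux_prod_relvar_le hk κ hκ Finset.univ
    linarith
end

section
/- If a random variable W satisfies W ≤ r almost surely and P[W > s] ≤ (1 - e^{-r}(e^s - 1))^k for all s ∈ [0, r·], where 1 - e^{-r}(e^s-1) ≤ e^{-s e^{-r}}, then E[W] ≤ e^r / k. -/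
open MeasureTheory

/-- if 0 ≤ W ≤ r and P[W > s] ≤ (1 - e^{-r}(e^s - 1))^k for s ∈ [0,r],
    then E[W] ≤ e^r / k. -/
theorem expectation_le_exp_div_k
    {Ω : Type*} [MeasurableSpace Ω] (μ : Measure Ω) [IsProbabilityMeasure μ]
    (W : Ω → ℝ) (hWmeas : Measurable W)
    (r : ℝ) (hr : 0 ≤ r) (hW0 : ∀ ω, 0 ≤ W ω) (hWr : ∀ ω, W ω ≤ r)
    (k : ℕ) (hk : 1 ≤ k)
    (htail : ∀ s ∈ Set.Icc (0 : ℝ) r,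
      (μ {ω | s < W ω}).toReal ≤ (1 - Real.exp (-r) * (Real.exp s - 1)) ^ k) :
    ∫ ω, W ω ∂μ ≤ Real.exp r / k := by
  have hkpos : (0 : ℝ) < k := by exact_mod_cast hk
  set b : ℝ := (k : ℝ) * Real.exp (-r) with hb
  have hbpos : 0 < b := mul_pos hkpos (Real.exp_pos _)
  have hWint : Integrable W μ := by
    refine (integrable_const r).mono' hWmeas.aestronglyMeasurable ?_
    filter_upwards with ω
    rw [Real.norm_eq_abs, abs_of_nonneg (hW0 ω)]
    exact hWr ω
  have hlayer := hWint.integral_eq_integral_meas_lt (Filter.Eventually.of_forall hW0)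
  rw [hlayer]
  -- pointwise bound on the tail
  have hptwise : ∀ s ∈ Set.Ioi (0 : ℝ),
      (μ {ω | s < W ω}).toReal ≤ Real.exp (-(b * s)) := by
    intro s hs
    simp only [Set.mem_Ioi] at hs
    by_cases hsr : s ≤ r
    · have h1 := htail s ⟨hs.le, hsr⟩
      have hbase_nn : 0 ≤ 1 - Real.exp (-r) * (Real.exp s - 1) := by
        have : Real.exp (-r) * (Real.exp s - 1) = Real.exp (s - r) - Real.exp (-r) := by
          rw [mul_sub, ← Real.exp_add, mul_one]; ring_nf
        rw [this]
        have h2 : Real.exp (s - r) ≤ 1 := Real.exp_le_one_iff.mpr (by linarith)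
        have h3 : 0 < Real.exp (-r) := Real.exp_pos _
        linarith
      have hbase : 1 - Real.exp (-r) * (Real.exp s - 1) ≤ Real.exp (-(s * Real.exp (-r))) := by
        have ha : Real.exp s - 1 ≥ s := by
          have := Real.add_one_le_exp s; linarith
        have hb2 : 1 - Real.exp (-r) * (Real.exp s - 1) ≤ 1 - s * Real.exp (-r) := by
          have h3 : 0 < Real.exp (-r) := Real.exp_pos _
          nlinarith
        calc 1 - Real.exp (-r) * (Real.exp s - 1) ≤ 1 - s * Real.exp (-r) := hb2
          _ = 1 + (-(s * Real.exp (-r))) := by ring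
          _ = -(s * Real.exp (-r)) + 1 := by ring
          _ ≤ Real.exp (-(s * Real.exp (-r))) := Real.add_one_le_exp _
      calc (μ {ω | s < W ω}).toReal ≤ (1 - Real.exp (-r) * (Real.exp s - 1)) ^ k := h1
        _ ≤ (Real.exp (-(s * Real.exp (-r)))) ^ k := pow_le_pow_left₀ hbase_nn hbase k
        _ = Real.exp (-(b * s)) := by
            rw [← Real.exp_nat_mul]; congr 1; rw [hb]; ring
    · have : μ {ω | s < W ω} = 0 := by
        have : {ω | s < W ω} = ∅ := by
          ext ω; simp only [Set.mem_setOf_eq, Set.mem_empty_iff_false, iff_false, not_lt]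
          exact (hWr ω).trans (le_of_not_ge hsr)
        simp [this]
      rw [this]
      simp [Real.exp_pos, le_of_lt]
  have hexp_int : IntegrableOn (fun s => Real.exp (-(b * s))) (Set.Ioi 0) := by
    simpa using exp_neg_integrableOn_Ioi 0 hbpos
  have hmono : ∫ s in Set.Ioi (0:ℝ), (μ {ω | s < W ω}).toReal
      ≤ ∫ s in Set.Ioi (0:ℝ), Real.exp (-(b * s)) := by
    refine integral_mono_of_nonneg ?_ hexp_int ?_
    · filter_upwards with s using ENNReal.toReal_nonneg
    · filter_upwards [ae_restrict_mem measurableSet_Ioi] with s hs using hptwise s hs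
  have hcalc : ∫ s in Set.Ioi (0:ℝ), Real.exp (-(b * s)) = b⁻¹ := by
    have := integral_comp_mul_left_Ioi (fun x => Real.exp (-x)) 0 hbpos
    simp only [mul_zero] at this
    rw [show (fun s => Real.exp (-(b * s))) = (fun s => Real.exp (-(b * s))) from rfl]
    calc ∫ s in Set.Ioi (0:ℝ), Real.exp (-(b * s)) = b⁻¹ • ∫ x in Set.Ioi (0:ℝ), Real.exp (-x) := this
      _ = b⁻¹ := by rw [integral_exp_neg_Ioi_zero]; simp
  have hfin : b⁻¹ = Real.exp r / k := by
    rw [hb, mul_inv, Real.exp_neg, inv_inv, div_eq_mul_inv, mul_comm]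
  rw [hcalc, hfin] at hmono
  exact hmono
end

section
/- In the ferromagnetic Ising model with external fields λ_v ∈ [0,1) and edge activities γ_e ≥ 1, the marginal probability that a vertex v takes spin +1 satisfies P[σ_v = +1] ≤ λ_v. -/
open Finset

def Compat {V : Type*} (c : V → V) (σ : V → Bool) : Prop :=
  ∀ u w : V, c u = c w → σ u = σ w

instance {V : Type*} [Fintype V] [DecidableEq V] (c : V → V) :
    DecidablePred (Compat c) := fun σ => by unfold Compat; infer_instance

lemma compat_join {V : Type*} [DecidableEq V] (c : V → V) (a b : V) (σ : V → Bool) :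
    Compat (fun u => if c u = c a then c b else c u) σ ↔ (Compat c σ ∧ σ a = σ b) := by
  constructor
  · intro h
    refine ⟨fun u w huw => h u w (by simp only [huw]), h a b (by simp)⟩
  · rintro ⟨hc, hab⟩ u w huw
    by_cases hu : c u = c a <;> by_cases hw : c w = c a
    · exact hc u w (hu.trans hw.symm)
    · simp only [if_pos hu, if_neg hw] at huw
      calc σ u = σ a := hc u a hu
        _ = σ b := hab
        _ = σ w := hc b w huw
    · simp only [if_neg hu, if_pos hw] at huw
      calc σ u = σ b := hc u b huw
        _ = σ a := hab.symm
        _ = σ w := hc a w hw.symm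
    · simp only [if_neg hu, if_neg hw] at huw
      exact hc u w huw

lemma key {V E : Type*} [Fintype V] [Fintype E] [DecidableEq V] [DecidableEq E]
    (ends : E → V × V) (γ : E → ℝ) (hγ : ∀ e, 1 ≤ γ e)
    (lam : V → ℝ) (hlam0 : ∀ u, 0 ≤ lam u) (hlam1 : ∀ u, lam u ≤ 1)
    (v : V) (s : Finset E) (c : V → V) :
    (∑ σ ∈ univ.filter (fun σ : V → Bool => σ v = true ∧ Compat c σ),
        (∏ u ∈ univ.filter (fun u => σ u = true), lam u) *
        ∏ e ∈ s, (if σ (ends e).1 = σ (ends e).2 then γ e else 1))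
    ≤ lam v *
      ∑ σ ∈ univ.filter (fun σ : V → Bool => Compat c σ),
        (∏ u ∈ univ.filter (fun u => σ u = true), lam u) *
        ∏ e ∈ s, (if σ (ends e).1 = σ (ends e).2 then γ e else 1) := by
  induction s using Finset.induction generalizing c with
  | empty =>
    simp only [Finset.prod_empty, mul_one]
    set F : (V → Bool) → (V → Bool) := fun σ u => if c u = c v then false else σ u with hF
    have hstep : ∀ σ ∈ univ.filter (fun σ : V → Bool => σ v = true ∧ Compat c σ),
        (∏ u ∈ univ.filter (fun u => σ u = true), lam u)
          ≤ lam v * ∏ u ∈ univ.filter (fun u => F σ u = true), lam u := by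
      intro σ hσ
      simp only [mem_filter, mem_univ, true_and] at hσ
      obtain ⟨hv, hcomp⟩ := hσ
      have hsplit : (univ.filter (fun u => σ u = true)) =
          (univ.filter (fun u => c u = c v)) ∪ (univ.filter (fun u => F σ u = true)) := by
        ext u
        simp only [mem_filter, mem_univ, true_and, mem_union, hF]
        by_cases h : c u = c v
        · simp [h, hcomp u v h, hv]
        · simp [h]
      have hdisj : Disjoint (univ.filter (fun u => c u = c v))
          (univ.filter (fun u => F σ u = true)) := by
        rw [Finset.disjoint_filter]
        intro u _ h
        simp [hF, h]
      rw [hsplit, Finset.prod_union hdisj]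
      have h1 : (∏ u ∈ univ.filter (fun u => c u = c v), lam u) ≤ lam v := by
        have hv' : v ∈ univ.filter (fun u => c u = c v) := by simp
        rw [← Finset.mul_prod_erase _ _ hv']
        have h2 : (∏ u ∈ (univ.filter (fun u => c u = c v)).erase v, lam u) ≤ 1 :=
          Finset.prod_le_one (fun u _ => hlam0 u) (fun u _ => hlam1 u)
        calc lam v * ∏ u ∈ (univ.filter (fun u => c u = c v)).erase v, lam u
            ≤ lam v * 1 := mul_le_mul_of_nonneg_left h2 (hlam0 v)
          _ = lam v := mul_one _
      have h2 : (0:ℝ) ≤ ∏ u ∈ univ.filter (fun u => F σ u = true), lam u :=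
        Finset.prod_nonneg (fun u _ => hlam0 u)
      exact mul_le_mul_of_nonneg_right h1 h2
    calc (∑ σ ∈ univ.filter (fun σ : V → Bool => σ v = true ∧ Compat c σ),
          ∏ u ∈ univ.filter (fun u => σ u = true), lam u)
        ≤ ∑ σ ∈ univ.filter (fun σ : V → Bool => σ v = true ∧ Compat c σ),
            lam v * ∏ u ∈ univ.filter (fun u => F σ u = true), lam u :=
          Finset.sum_le_sum hstep
      _ = lam v * ∑ σ ∈ univ.filter (fun σ : V → Bool => σ v = true ∧ Compat c σ),
            ∏ u ∈ univ.filter (fun u => F σ u = true), lam u := by rw [Finset.mul_sum]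
      _ ≤ lam v * ∑ σ ∈ univ.filter (fun σ : V → Bool => Compat c σ),
            ∏ u ∈ univ.filter (fun u => σ u = true), lam u := by
          apply mul_le_mul_of_nonneg_left _ (hlam0 v)
          have hinj : ∀ σ₁ ∈ univ.filter (fun σ : V → Bool => σ v = true ∧ Compat c σ),
              ∀ σ₂ ∈ univ.filter (fun σ : V → Bool => σ v = true ∧ Compat c σ),
              F σ₁ = F σ₂ → σ₁ = σ₂ := by
            intro σ₁ h₁ σ₂ h₂ heq
            simp only [mem_filter, mem_univ, true_and] at h₁ h₂
            funext u
            by_cases h : c u = c v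
            · rw [h₁.2 u v h, h₂.2 u v h, h₁.1, h₂.1]
            · have := congrFun heq u
              simpa [hF, h] using this
          have himg : ∑ σ' ∈ (univ.filter (fun σ : V → Bool => σ v = true ∧ Compat c σ)).image F,
              (∏ u ∈ univ.filter (fun u => σ' u = true), lam u)
              = ∑ σ ∈ univ.filter (fun σ : V → Bool => σ v = true ∧ Compat c σ),
                ∏ u ∈ univ.filter (fun u => F σ u = true), lam u := Finset.sum_image hinj
          rw [← himg]
          apply Finset.sum_le_sum_of_subset_of_nonneg
          · intro σ' hσ'
            simp only [Finset.mem_image, mem_filter, mem_univ, true_and] at hσ' ⊢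
            obtain ⟨σ, ⟨_, hcomp⟩, rfl⟩ := hσ'
            intro u w huw
            simp only [hF]
            by_cases hu : c u = c v <;> by_cases hw : c w = c v
            · simp [hu, hw]
            · exact absurd (huw ▸ hu) hw
            · exact absurd (huw.symm ▸ hw) hu
            · simp [hu, hw, hcomp u w huw]
          · intro σ' _ _
            exact Finset.prod_nonneg (fun u _ => hlam0 u)
  | @insert e t he ih =>
    have hsplit : ∀ (P : (V → Bool) → Prop) (_ : DecidablePred P),
        (∑ σ ∈ univ.filter P,
          (∏ u ∈ univ.filter (fun u => σ u = true), lam u) *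
          ∏ e' ∈ insert e t, (if σ (ends e').1 = σ (ends e').2 then γ e' else 1))
        = (∑ σ ∈ univ.filter P,
            (∏ u ∈ univ.filter (fun u => σ u = true), lam u) *
            ∏ e' ∈ t, (if σ (ends e').1 = σ (ends e').2 then γ e' else 1))
          + (γ e - 1) *
            ∑ σ ∈ univ.filter (fun σ => P σ ∧ σ (ends e).1 = σ (ends e).2),
              (∏ u ∈ univ.filter (fun u => σ u = true), lam u) *
              ∏ e' ∈ t, (if σ (ends e').1 = σ (ends e').2 then γ e' else 1) := by
      intro P _
      have hpt : ∀ σ : V → Bool,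
          (∏ u ∈ univ.filter (fun u => σ u = true), lam u) *
            ∏ e' ∈ insert e t, (if σ (ends e').1 = σ (ends e').2 then γ e' else 1)
          = (∏ u ∈ univ.filter (fun u => σ u = true), lam u) *
              ∏ e' ∈ t, (if σ (ends e').1 = σ (ends e').2 then γ e' else 1)
            + (if σ (ends e).1 = σ (ends e).2 then
                (γ e - 1) * ((∏ u ∈ univ.filter (fun u => σ u = true), lam u) *
                  ∏ e' ∈ t, (if σ (ends e').1 = σ (ends e').2 then γ e' else 1)) else 0) := by
        intro σ
        rw [Finset.prod_insert he]
        by_cases h : σ (ends e).1 = σ (ends e).2 <;> simp only [h, if_true, if_false,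
          if_pos, if_neg, not_false_iff] <;> ring
      simp only [hpt]
      rw [Finset.sum_add_distrib, ← Finset.sum_filter, Finset.filter_filter, Finset.mul_sum]
    rw [hsplit _ inferInstance, hsplit _ inferInstance]
    set c' : V → V := fun u => if c u = c (ends e).1 then c (ends e).2 else c u with hc'
    have hfilt1 : (univ.filter (fun σ : V → Bool =>
        (σ v = true ∧ Compat c σ) ∧ σ (ends e).1 = σ (ends e).2))
        = univ.filter (fun σ : V → Bool => σ v = true ∧ Compat c' σ) := by
      apply Finset.filter_congr
      intro σ _
      rw [hc', compat_join]
      tauto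
    have hfilt2 : (univ.filter (fun σ : V → Bool =>
        Compat c σ ∧ σ (ends e).1 = σ (ends e).2))
        = univ.filter (fun σ : V → Bool => Compat c' σ) := by
      apply Finset.filter_congr
      intro σ _
      rw [hc', compat_join]
    rw [hfilt1, hfilt2]
    have h1 := ih c
    have h2 := ih c'
    have hγe : (0:ℝ) ≤ γ e - 1 := by linarith [hγ e]
    nlinarith [mul_le_mul_of_nonneg_left h2 hγe]

/-- in the ferromagnetic Ising model with edge activities γ_e ≥ 1 and
    external fields 0 ≤ λ_v < 1, the marginal P[σ_v = +1] is at most λ_v.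
    The graph is given by a finite vertex type `V`, a finite edge type `E` and an
    endpoint map `ends`; a configuration `σ : V → Bool` has `σ u = true` meaning +1. -/
theorem ising_marginal_le_field
    (V E : Type*) [Fintype V] [Fintype E] [DecidableEq V]
    (ends : E → V × V)
    (γ : E → ℝ) (hγ : ∀ e, 1 ≤ γ e)
    (lam : V → ℝ) (hlam0 : ∀ u, 0 ≤ lam u) (hlam1 : ∀ u, lam u < 1)
    (weight : (V → Bool) → ℝ)
    (hweight : ∀ σ, weight σ =
      (∏ u ∈ Finset.univ.filter (fun u => σ u = true), lam u) *
      ∏ e, (if σ (ends e).1 = σ (ends e).2 then γ e else 1))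
    (v : V) :
    (∑ σ ∈ Finset.univ.filter (fun σ : V → Bool => σ v = true), weight σ) /
      (∑ σ : V → Bool, weight σ) ≤ lam v := by
  have hwnn : ∀ σ, 0 ≤ weight σ := by
    intro σ
    rw [hweight σ]
    apply mul_nonneg (Finset.prod_nonneg fun u _ => hlam0 u)
    apply Finset.prod_nonneg
    intro e _
    split <;> [linarith [hγ e]; norm_num]
  have hZpos : 0 < ∑ σ : V → Bool, weight σ := by
    have h1 : (0:ℝ) < weight (fun _ => false) := by
      rw [hweight]
      have h0 : (univ.filter (fun u : V => (fun _ : V => false) u = true)) = ∅ := by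
        simp
      rw [h0, Finset.prod_empty, one_mul]
      refine Finset.prod_pos fun e _ => ?_
      rw [if_pos rfl]
      linarith [hγ e]
    calc (0:ℝ) < weight (fun _ => false) := h1
      _ ≤ ∑ σ : V → Bool, weight σ :=
          Finset.single_le_sum (fun σ _ => hwnn σ) (Finset.mem_univ _)
  rw [div_le_iff₀ hZpos]
  classical
  have hk := key ends γ hγ lam hlam0 (fun u => (hlam1 u).le) v Finset.univ id
  have hid : ∀ σ : V → Bool, Compat (id : V → V) σ := by
    intro σ u w huw
    simpa using congrArg σ huw
  have e1 : (univ.filter (fun σ : V → Bool => σ v = true ∧ Compat id σ))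
      = univ.filter (fun σ : V → Bool => σ v = true) := by
    apply Finset.filter_congr
    intro σ _
    simp [hid σ]
  have e2 : (univ.filter (fun σ : V → Bool => Compat (id : V → V) σ)) = univ := by
    apply Finset.filter_true_of_mem
    intro σ _
    exact hid σ
  rw [e1, e2] at hk
  calc (∑ σ ∈ Finset.univ.filter (fun σ : V → Bool => σ v = true), weight σ)
      = ∑ σ ∈ univ.filter (fun σ : V → Bool => σ v = true),
        (∏ u ∈ univ.filter (fun u => σ u = true), lam u) *
        ∏ e, (if σ (ends e).1 = σ (ends e).2 then γ e else 1) := by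
        exact Finset.sum_congr rfl fun σ _ => hweight σ
    _ ≤ lam v * ∑ σ : V → Bool,
        (∏ u ∈ univ.filter (fun u => σ u = true), lam u) *
        ∏ e, (if σ (ends e).1 = σ (ends e).2 then γ e else 1) := hk
    _ = lam v * ∑ σ : V → Bool, weight σ := by
        congr 1
        exact Finset.sum_congr rfl fun σ _ => (hweight σ).symm
end
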